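/- arXiv:2108.09831 — 2 statements merged into one kernel-verified Lean document; each statement's English description precedes it below -/
import Mathlib

section
/- The functions ψ^{kℓ}, 1 ≤ k ≤ ℓ ≤ N, are linearly independent and their linear span equals the a-orthogonal complement of the tangent space, {z ∈ Ṽ^N : a(z, η) = 0 for all η ∈ T_φ}; in particular they form a basis of this complement. -/
open scoped RealInnerProductSpace

/-- Multiplication of a tuple by a matrix from the right: `(vS)_j = Σ_i S_{ij} v_i`. -/
def smulMat {N : ℕ} {V : Type*} [AddCommGroup V] [Module ℝ V]
    (v : Fin N → V) (S : Matrix (Fin N) (Fin N) ℝ) : Fin N → V :=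
  fun j => ∑ i, S i j • v i

/-- The normalized symmetric matrices `S^{ij}`: `S^{ii} = e_i e_iᵀ` and, for `i ≠ j`,
`S^{ij} = (e_i e_jᵀ + e_j e_iᵀ)/√2`. -/
noncomputable def SijMat {N : ℕ} (i j : Fin N) : Matrix (Fin N) (Fin N) ℝ :=
  if i = j then Matrix.single i i 1
  else (Real.sqrt 2)⁻¹ • (Matrix.single i j 1 + Matrix.single j i 1)

/-- The outer product of tuples in `Ṽ^N`, computed in `H₀` through the embedding `ι`. -/
noncomputable def outerProdI {N : ℕ} {V H₀ : Type*} [NormedAddCommGroup V]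
    [NormedAddCommGroup H₀] [InnerProductSpace ℝ H₀] [NormedSpace ℝ V]
    (ι : V →L[ℝ] H₀) (v w : Fin N → V) : Matrix (Fin N) (Fin N) ℝ :=
  Matrix.of fun i j => ⟪ι (v i), ι (w j)⟫

/-- The inner product `(v,w)_H = tr⟦v,w⟧`, computed in `H₀` through the embedding `ι`. -/
noncomputable def innerHI {N : ℕ} {V H₀ : Type*} [NormedAddCommGroup V]
    [NormedAddCommGroup H₀] [InnerProductSpace ℝ H₀] [NormedSpace ℝ V]
    (ι : V →L[ℝ] H₀) (v w : Fin N → V) : ℝ :=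
  ∑ j, ⟪ι (v j), ι (w j)⟫

section aux
variable {N : ℕ} {V H₀ : Type*} [NormedAddCommGroup V] [InnerProductSpace ℝ V]
  [NormedAddCommGroup H₀] [InnerProductSpace ℝ H₀] (ι : V →L[ℝ] H₀)

lemma innerHI_sub (z w x : Fin N → V) :
    innerHI ι (z - w) x = innerHI ι z x - innerHI ι w x := by
  simp [innerHI, inner_sub_left, Finset.sum_sub_distrib]

lemma innerHI_sum {α : Type*} [Fintype α] (g : α → ℝ) (f : α → Fin N → V) (x : Fin N → V) :
    innerHI ι (∑ p, g p • f p) x = ∑ p, g p * innerHI ι (f p) x := by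
  simp only [innerHI, Finset.sum_apply, Pi.smul_apply, map_sum, map_smul, sum_inner,
    real_inner_smul_left, Finset.mul_sum]
  rw [Finset.sum_comm]

lemma pairing (w : Fin N → V) (φ : Fin N → V) (S : Matrix (Fin N) (Fin N) ℝ) :
    innerHI ι w (smulMat φ S) = ∑ j, ∑ i, S i j * ⟪ι (w j), ι (φ i)⟫ := by
  simp [innerHI, smulMat, map_sum, map_smul, inner_sum, real_inner_smul_right]

lemma pairing_Sij (w : Fin N → V) (φ : Fin N → V) (i j : Fin N) :
    innerHI ι w (smulMat φ (SijMat i j)) =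
      if i = j then ⟪ι (w i), ι (φ i)⟫
      else (Real.sqrt 2)⁻¹ * (⟪ι (w j), ι (φ i)⟫ + ⟪ι (w i), ι (φ j)⟫) := by
  rw [pairing]
  by_cases h : i = j
  · subst h
    simp [SijMat, Matrix.single, ite_and, Finset.sum_ite_eq, Finset.sum_ite_eq']
  · have hne : j ≠ i := fun hji => h hji.symm
    simp only [SijMat, if_neg h, Matrix.add_apply, Matrix.smul_apply, Matrix.single,
      Matrix.of_apply, smul_eq_mul, ite_and, add_mul, zero_add, add_zero]
    simp only [mul_assoc, ← Finset.mul_sum]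
    congr 1
    simp only [add_mul, ite_mul, zero_mul, one_mul, Finset.sum_add_distrib,
      Finset.sum_ite_eq, Finset.mem_univ, if_true]

lemma key_zero (aForm : V →ₗ[ℝ] V →ₗ[ℝ] ℝ)
    (hcoer : ∃ α > 0, ∀ u : V, α * ‖u‖ ^ 2 ≤ aForm u u)
    (φ : Fin N → V) (w : Fin N → V)
    (hwa : ∀ η : Fin N → V, outerProdI ι η φ + outerProdI ι φ η = 0 →
        (∑ j, aForm (w j) (η j)) = 0)
    (hwp : ∀ i j : Fin N, i ≤ j → innerHI ι w (smulMat φ (SijMat i j)) = 0) :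
    w = 0 := by
  obtain ⟨α, hα, hco⟩ := hcoer
  have hA : ∀ i j : Fin N, ⟪ι (w i), ι (φ j)⟫ + ⟪ι (w j), ι (φ i)⟫ = 0 := by
    have key : ∀ i j : Fin N, i ≤ j → ⟪ι (w i), ι (φ j)⟫ + ⟪ι (w j), ι (φ i)⟫ = 0 := by
      intro i j hij
      have hp := hwp i j hij
      rw [pairing_Sij] at hp
      by_cases h : i = j
      · subst h
        rw [if_pos rfl] at hp
        linarith
      · rw [if_neg h] at hp
        have h2 : (Real.sqrt 2)⁻¹ ≠ 0 := by positivity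
        have := (mul_eq_zero.mp hp).resolve_left h2
        linarith
    intro i j
    rcases le_total i j with hij | hji
    · exact key i j hij
    · have := key j i hji; linarith
  have hwT : outerProdI ι w φ + outerProdI ι φ w = 0 := by
    ext i j
    simp only [Matrix.add_apply, outerProdI, Matrix.of_apply, Matrix.zero_apply]
    rw [real_inner_comm (ι (w j)) (ι (φ i))]
    exact hA i j
  have h0 : (∑ j, aForm (w j) (w j)) = 0 := hwa w hwT
  have hnn : ∀ j : Fin N, j ∈ Finset.univ → (0:ℝ) ≤ aForm (w j) (w j) := by
    intro j _
    have := hco (w j)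
    nlinarith [sq_nonneg ‖w j‖]
  funext j
  have hj : aForm (w j) (w j) = 0 :=
    (Finset.sum_eq_zero_iff_of_nonneg hnn).mp h0 j (Finset.mem_univ j)
  have h1 := hco (w j)
  have hx2 : ‖w j‖ ^ 2 = 0 := le_antisymm (by nlinarith) (sq_nonneg _)
  have h2 : ‖w j‖ = 0 := (pow_eq_zero_iff (by norm_num)).mp hx2
  simpa using norm_eq_zero.mp h2

end aux

/-- the functions `ψ^{kℓ}` (for `k ≤ ℓ`) are linearly independent and span
the `a`-orthogonal complement of the tangent space `T_φ`. -/
theorem psi_kl_basis_of_a_normal_space {N : ℕ} (hN : 1 ≤ N)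
    {V H₀ : Type*}
    [NormedAddCommGroup V] [InnerProductSpace ℝ V] [CompleteSpace V]
    [NormedAddCommGroup H₀] [InnerProductSpace ℝ H₀] [CompleteSpace H₀]
    (ι : V →L[ℝ] H₀) (hι : Function.Injective ι)
    (aForm : V →ₗ[ℝ] V →ₗ[ℝ] ℝ)
    (hsymm : ∀ u w : V, aForm u w = aForm w u)
    (hcoer : ∃ α > 0, ∀ u : V, α * ‖u‖ ^ 2 ≤ aForm u u)
    (hbdd : ∃ β > 0, ∀ u w : V, |aForm u w| ≤ β * ‖u‖ * ‖w‖)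
    (φ : Fin N → V) (hφ : outerProdI ι φ φ = 1)
    (ψ : Fin N → Fin N → Fin N → V)
    (hψa : ∀ k ℓ : Fin N, k ≤ ℓ →
      ∀ η : Fin N → V, outerProdI ι η φ + outerProdI ι φ η = 0 →
        (∑ j, aForm (ψ k ℓ j) (η j)) = 0)
    (hψH : ∀ k ℓ : Fin N, k ≤ ℓ → ∀ i j : Fin N, i ≤ j →
      innerHI ι (ψ k ℓ) (smulMat φ (SijMat i j)) =
        (if i = k then (1 : ℝ) else 0) * (if j = ℓ then (1 : ℝ) else 0)) :
    LinearIndependent ℝ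
      (fun p : {p : Fin N × Fin N // p.1 ≤ p.2} => ψ p.1.1 p.1.2) ∧
    (Submodule.span ℝ
        {x : Fin N → V | ∃ k ℓ : Fin N, k ≤ ℓ ∧ x = ψ k ℓ} : Set (Fin N → V)) =
      {z : Fin N → V | ∀ η : Fin N → V,
        outerProdI ι η φ + outerProdI ι φ η = 0 → (∑ j, aForm (z j) (η j)) = 0} := by
  constructor
  · rw [Fintype.linearIndependent_iff]
    intro g hg p
    obtain ⟨⟨i, j⟩, hij⟩ := p
    have h1 : innerHI ι (∑ q : {p : Fin N × Fin N // p.1 ≤ p.2}, g q • ψ q.1.1 q.1.2)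
        (smulMat φ (SijMat i j)) = 0 := by
      rw [hg]
      simp [innerHI]
    rw [innerHI_sum] at h1
    rw [Finset.sum_congr rfl
      (fun q _ => by rw [hψH q.1.1 q.1.2 q.2 i j hij])] at h1
    rw [Finset.sum_eq_single (⟨(i, j), hij⟩ : {p : Fin N × Fin N // p.1 ≤ p.2})] at h1
    · simpa using h1
    · intro q _ hq
      by_cases h1 : i = q.1.1
      · by_cases h2 : j = q.1.2
        · exact absurd (Subtype.ext (Prod.ext h1.symm h2.symm)) hq
        · simp [h2]
      · simp [h1]
    · simp
  · apply Set.Subset.antisymm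
    · have hle : Submodule.span ℝ {x : Fin N → V | ∃ k ℓ : Fin N, k ≤ ℓ ∧ x = ψ k ℓ} ≤
        { carrier := {z : Fin N → V | ∀ η : Fin N → V,
            outerProdI ι η φ + outerProdI ι φ η = 0 → (∑ j, aForm (z j) (η j)) = 0}
          add_mem' := by
            intro a b ha hb η hη
            simp only [Pi.add_apply, map_add, LinearMap.add_apply, Finset.sum_add_distrib]
            rw [ha η hη, hb η hη, add_zero]
          zero_mem' := by intro η hη; simp
          smul_mem' := by
            intro r a ha η hη
            simp only [Pi.smul_apply, map_smul, LinearMap.smul_apply, smul_eq_mul,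
              ← Finset.mul_sum]
            rw [ha η hη, mul_zero] } := by
        apply Submodule.span_le.mpr
        rintro x ⟨k, ℓ, hkl, rfl⟩
        exact hψa k ℓ hkl
      exact fun x hx => hle hx
    · intro z hz
      simp only [Set.mem_setOf_eq] at hz
      set c : Fin N → Fin N → ℝ := fun i j => innerHI ι z (smulMat φ (SijMat i j)) with hc
      set u : Fin N → V :=
        ∑ q : {p : Fin N × Fin N // p.1 ≤ p.2}, c q.1.1 q.1.2 • ψ q.1.1 q.1.2 with hu
      have hw : z - u = 0 := by
        apply key_zero ι aForm hcoer φ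
        · intro η hη
          have step : (∑ j, aForm ((z - u) j) (η j)) =
              (∑ j, aForm (z j) (η j)) -
                ∑ q : {p : Fin N × Fin N // p.1 ≤ p.2},
                  c q.1.1 q.1.2 * ∑ j, aForm (ψ q.1.1 q.1.2 j) (η j) := by
            simp only [Pi.sub_apply, map_sub, LinearMap.sub_apply, Finset.sum_sub_distrib, hu,
              Finset.sum_apply, Pi.smul_apply, map_sum, map_smul, LinearMap.sum_apply,
              LinearMap.smul_apply, smul_eq_mul, Finset.mul_sum]
            rw [Finset.sum_comm]
          rw [step, hz η hη]
          rw [Finset.sum_congr rfl (fun q _ => by rw [hψa q.1.1 q.1.2 q.2 η hη])]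
          simp
        · intro i j hij
          rw [innerHI_sub, innerHI_sum]
          rw [Finset.sum_congr rfl
            (fun q _ => by rw [hψH q.1.1 q.1.2 q.2 i j hij])]
          rw [Finset.sum_eq_single (⟨(i, j), hij⟩ : {p : Fin N × Fin N // p.1 ≤ p.2})]
          · simp [hc]
          · intro q _ hq
            by_cases h1 : i = q.1.1
            · by_cases h2 : j = q.1.2
              · exact absurd (Subtype.ext (Prod.ext h1.symm h2.symm)) hq
              · simp [h2]
            · simp [h1]
          · simp
      have hzu : z = u := sub_eq_zero.mp hw
      rw [hzu]
      exact Submodule.sum_mem _ (fun q _ =>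
        Submodule.smul_mem _ _ (Submodule.subset_span ⟨q.1.1, q.1.2, q.2, rfl⟩))
end

section
/- Define P_φ(v) := v − Σ_{1 ≤ k ≤ ℓ ≤ N} (v, φ^{kℓ})_H · ψ^{kℓ} for v ∈ Ṽ^N. Then for every v ∈ Ṽ^N: (i) P_φ(v) ∈ T_φ; (ii) a(v − P_φ(v), η) = 0 for all η ∈ T_φ; and (iii) P_φ(P_φ(v)) = P_φ(v). Hence P_φ is the a-orthogonal projection of Ṽ^N onto T_φ. -/
open scoped RealInnerProductSpace

/-- The map `P_φ(v) = v − Σ_{k ≤ ℓ} (v, φ^{kℓ})_H ψ^{kℓ}`. -/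
noncomputable def Pphi {N : ℕ} {V H₀ : Type*} [NormedAddCommGroup V]
    [NormedAddCommGroup H₀] [InnerProductSpace ℝ H₀] [NormedSpace ℝ V]
    (ι : V →L[ℝ] H₀) (φ : Fin N → V) (ψ : Fin N → Fin N → Fin N → V)
    (v : Fin N → V) : Fin N → V :=
  v - ∑ k, ∑ ℓ, if k ≤ ℓ then innerHI ι v (smulMat φ (SijMat k ℓ)) • ψ k ℓ else 0

lemma stdBasis_coef {N : ℕ} (M : Matrix (Fin N) (Fin N) ℝ) (a b : Fin N) :
    ∑ i, ∑ j, Matrix.single a b (1:ℝ) i j * M i j = M a b := by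
  simp [Matrix.single, ite_and]

lemma coef_eq {N : ℕ} (M : Matrix (Fin N) (Fin N) ℝ) (k ℓ : Fin N) :
    ∑ i, ∑ j, SijMat k ℓ i j * M i j =
      if k = ℓ then M k k else (Real.sqrt 2)⁻¹ * (M k ℓ + M ℓ k) := by
  unfold SijMat
  split_ifs with h
  · subst h; exact stdBasis_coef M k k
  · simp only [Matrix.smul_apply, Matrix.add_apply, smul_eq_mul, add_mul, mul_assoc,
      Finset.sum_add_distrib, ← Finset.mul_sum]
    rw [stdBasis_coef, stdBasis_coef, mul_add]

lemma SijMat_symm {N : ℕ} (k ℓ i j : Fin N) : SijMat k ℓ i j = SijMat k ℓ j i := by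
  unfold SijMat
  split_ifs with h
  · simp [Matrix.single, and_comm]
  · simp only [Matrix.smul_apply, Matrix.add_apply, smul_eq_mul, Matrix.single,
      Matrix.of_apply]
    rw [add_comm]
    congr 1 <;> simp [and_comm]

lemma sum_symm_swap {N : ℕ} (S X : Matrix (Fin N) (Fin N) ℝ) (hS : ∀ i j, S i j = S j i) :
    ∑ i, ∑ j, S i j * X i j = ∑ i, ∑ j, S i j * X j i := by
  rw [Finset.sum_comm]
  exact Finset.sum_congr rfl fun i _ => Finset.sum_congr rfl fun j _ => by rw [hS]

lemma sqrt2_inv_mul : (Real.sqrt 2)⁻¹ * (Real.sqrt 2)⁻¹ = 2⁻¹ := by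
  rw [← mul_inv]
  norm_num [Real.mul_self_sqrt]

lemma SijMat_eq_zero {N : ℕ} {k ℓ p q : Fin N} (h1 : ¬(k = p ∧ ℓ = q))
    (h2 : ¬(k = q ∧ ℓ = p)) : SijMat k ℓ p q = 0 := by
  unfold SijMat
  split_ifs with hd
  · subst hd
    simp only [Matrix.single, Matrix.of_apply]
    rw [if_neg h1]
  · simp only [Matrix.smul_apply, Matrix.add_apply, Matrix.single, Matrix.of_apply,
      smul_eq_mul]
    rw [if_neg h1, if_neg (fun hc => h2 ⟨hc.2, hc.1⟩)]
    ring

lemma SijMat_diag {N : ℕ} (p : Fin N) : SijMat p p p p = 1 := by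
  simp [SijMat, Matrix.single]

lemma SijMat_off {N : ℕ} {k ℓ : Fin N} (h : k ≠ ℓ) : SijMat k ℓ k ℓ = (Real.sqrt 2)⁻¹ := by
  unfold SijMat
  rw [if_neg h]
  simp [Matrix.single, h, Ne.symm h]

lemma sym_expand {N : ℕ} (M : Matrix (Fin N) (Fin N) ℝ)
    (hM : ∀ i j, M i j = M j i) (p q : Fin N) :
    (∑ k, ∑ ℓ, if k ≤ ℓ then (∑ i, ∑ j, SijMat k ℓ i j * M i j) * SijMat k ℓ p q else 0)
      = M p q := by
  rcases lt_trichotomy p q with h | h | h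
  · rw [Finset.sum_eq_single p]
    · rw [Finset.sum_eq_single q]
      · rw [if_pos h.le, coef_eq, if_neg h.ne, SijMat_off h.ne]
        rw [hM q p]
        have h2 : (Real.sqrt 2)⁻¹ * (M p q + M p q) * (Real.sqrt 2)⁻¹
            = ((Real.sqrt 2)⁻¹ * (Real.sqrt 2)⁻¹) * (2 * M p q) := by ring
        rw [h2, sqrt2_inv_mul]; ring
      · intro ℓ _ hℓ
        split_ifs with hle
        · rw [SijMat_eq_zero (fun hc => hℓ hc.2) (fun hc => h.ne hc.1), mul_zero]
        · rfl
      · simp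
    · intro k _ hk
      apply Finset.sum_eq_zero
      intro ℓ _
      split_ifs with hle
      · rw [SijMat_eq_zero (fun hc => hk hc.1) (fun hc => by
          rcases hc with ⟨rfl, rfl⟩; exact absurd hle (not_le.2 h)), mul_zero]
      · rfl
    · simp
  · subst h
    rw [Finset.sum_eq_single p]
    · rw [Finset.sum_eq_single p]
      · rw [if_pos le_rfl, coef_eq, if_pos rfl, SijMat_diag, mul_one]
      · intro ℓ _ hℓ
        split_ifs with hle
        · rw [SijMat_eq_zero (fun hc => hℓ hc.2) (fun hc => hℓ hc.2), mul_zero]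
        · rfl
      · simp
    · intro k _ hk
      apply Finset.sum_eq_zero
      intro ℓ _
      split_ifs with hle
      · rw [SijMat_eq_zero (fun hc => hk hc.1) (fun hc => hk hc.1), mul_zero]
      · rfl
    · simp
  · rw [Finset.sum_eq_single q]
    · rw [Finset.sum_eq_single p]
      · rw [if_pos h.le, coef_eq, if_neg h.ne, SijMat_symm, SijMat_off h.ne]
        rw [hM q p]
        have h2 : (Real.sqrt 2)⁻¹ * (M p q + M p q) * (Real.sqrt 2)⁻¹
            = ((Real.sqrt 2)⁻¹ * (Real.sqrt 2)⁻¹) * (2 * M p q) := by ring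
        rw [h2, sqrt2_inv_mul]; ring
      · intro ℓ _ hℓ
        split_ifs with hle
        · rw [SijMat_eq_zero (fun hc => h.ne hc.1) (fun hc => hℓ hc.2), mul_zero]
        · rfl
      · simp
    · intro k _ hk
      apply Finset.sum_eq_zero
      intro ℓ _
      split_ifs with hle
      · rw [SijMat_eq_zero (fun hc => by
          rcases hc with ⟨rfl, rfl⟩; exact absurd hle (not_le.2 h)) (fun hc => hk hc.1), mul_zero]
      · rfl
    · simp


/-- `P_φ` maps into the tangent space, `v − P_φ(v)` is `a`-orthogonal to the
tangent space, and `P_φ` is idempotent; hence `P_φ` is the `a`-orthogonal projection onto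
the tangent space `T_φ`. -/
theorem Pphi_is_a_orthogonal_projection {N : ℕ} (hN : 1 ≤ N)
    {V H₀ : Type*}
    [NormedAddCommGroup V] [InnerProductSpace ℝ V] [CompleteSpace V]
    [NormedAddCommGroup H₀] [InnerProductSpace ℝ H₀] [CompleteSpace H₀]
    (ι : V →L[ℝ] H₀) (hι : Function.Injective ι)
    (aForm : V →ₗ[ℝ] V →ₗ[ℝ] ℝ)
    (hsymm : ∀ u w : V, aForm u w = aForm w u)
    (hcoer : ∃ α > 0, ∀ u : V, α * ‖u‖ ^ 2 ≤ aForm u u)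
    (hbdd : ∃ β > 0, ∀ u w : V, |aForm u w| ≤ β * ‖u‖ * ‖w‖)
    (φ : Fin N → V) (hφ : outerProdI ι φ φ = 1)
    (ψ : Fin N → Fin N → Fin N → V)
    (hψa : ∀ k ℓ : Fin N, k ≤ ℓ →
      ∀ η : Fin N → V, outerProdI ι η φ + outerProdI ι φ η = 0 →
        (∑ j, aForm (ψ k ℓ j) (η j)) = 0)
    (hψH : ∀ k ℓ : Fin N, k ≤ ℓ → ∀ i j : Fin N, i ≤ j →
      innerHI ι (ψ k ℓ) (smulMat φ (SijMat i j)) =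
        (if i = k then (1 : ℝ) else 0) * (if j = ℓ then (1 : ℝ) else 0)) :
    ∀ v : Fin N → V,
      (outerProdI ι (Pphi ι φ ψ v) φ + outerProdI ι φ (Pphi ι φ ψ v) = 0) ∧
      (∀ η : Fin N → V, outerProdI ι η φ + outerProdI ι φ η = 0 →
        (∑ j, aForm (v j - Pphi ι φ ψ v j) (η j)) = 0) ∧
      Pphi ι φ ψ (Pphi ι φ ψ v) = Pphi ι φ ψ v := by
  intro v
  set w := Pphi ι φ ψ v with hw
  have innerHI_smulMat : ∀ (u : Fin N → V) (S : Matrix (Fin N) (Fin N) ℝ),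
      innerHI ι u (smulMat φ S) = ∑ i, ∑ j, S i j * ⟪ι (u j), ι (φ i)⟫ := by
    intro u S
    unfold innerHI smulMat
    rw [Finset.sum_comm]
    refine Finset.sum_congr rfl fun i _ => ?_
    simp [inner_sum, real_inner_smul_right]
  -- expansion of entries of w against φ
  have hwp : ∀ p q : Fin N, ⟪ι (w p), ι (φ q)⟫ = ⟪ι (v p), ι (φ q)⟫ -
      ∑ k, ∑ ℓ, (if k ≤ ℓ then
        innerHI ι v (smulMat φ (SijMat k ℓ)) * ⟪ι (ψ k ℓ p), ι (φ q)⟫ else 0) := by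
    intro p q
    simp only [hw, Pphi, Pi.sub_apply, Finset.sum_apply, ite_apply, Pi.smul_apply, Pi.zero_apply,
      map_sub, map_sum, inner_sub_left, sum_inner]
    congr 1
    refine Finset.sum_congr rfl fun k _ => Finset.sum_congr rfl fun ℓ _ => ?_
    split_ifs
    · rw [map_smul, real_inner_smul_left]
    · simp
  -- the symmetric matrix M built from v
  set Mv : Matrix (Fin N) (Fin N) ℝ :=
    Matrix.of fun i j => ⟪ι (v i), ι (φ j)⟫ + ⟪ι (v j), ι (φ i)⟫ with hMv
  have hMvsymm : ∀ i j, Mv i j = Mv j i := by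
    intro i j; simp [hMv, add_comm]
  -- the coefficients in terms of Mv
  have hc : ∀ k ℓ : Fin N, innerHI ι v (smulMat φ (SijMat k ℓ)) =
      2⁻¹ * ∑ i, ∑ j, SijMat k ℓ i j * Mv i j := by
    intro k ℓ
    rw [innerHI_smulMat]
    have hs := sum_symm_swap (SijMat k ℓ) (Matrix.of fun m n => ⟪ι (v n), ι (φ m)⟫)
      (SijMat_symm k ℓ)
    simp only [Matrix.of_apply] at hs
    have : ∑ i, ∑ j, SijMat k ℓ i j * Mv i j =
        (∑ i, ∑ j, SijMat k ℓ i j * ⟪ι (v j), ι (φ i)⟫)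
          + ∑ i, ∑ j, SijMat k ℓ i j * ⟪ι (v i), ι (φ j)⟫ := by
      rw [← Finset.sum_add_distrib]
      refine Finset.sum_congr rfl fun i _ => ?_
      rw [← Finset.sum_add_distrib]
      refine Finset.sum_congr rfl fun j _ => ?_
      simp [hMv]
      ring
    rw [this, ← hs]
    ring
  -- symmetric part of ψ's outer product equals 2 * SijMat
  have hD : ∀ k ℓ : Fin N, k ≤ ℓ → ∀ p q : Fin N,
      ⟪ι (ψ k ℓ p), ι (φ q)⟫ + ⟪ι (ψ k ℓ q), ι (φ p)⟫ = 2 * SijMat k ℓ p q := by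
    intro k ℓ hkl p q
    set D : Matrix (Fin N) (Fin N) ℝ :=
      Matrix.of fun i j => ⟪ι (ψ k ℓ i), ι (φ j)⟫ + ⟪ι (ψ k ℓ j), ι (φ i)⟫ with hDdef
    have hDsymm : ∀ i j, D i j = D j i := by intro i j; simp [hDdef, add_comm]
    have hcoefD : ∀ i j : Fin N, ∑ m, ∑ n, SijMat i j m n * D m n =
        2 * ((if i = k then (1:ℝ) else 0) * (if j = ℓ then 1 else 0)) ∨ ¬ i ≤ j := by
      intro i j
      by_cases hij : i ≤ j
      · left
        have h1 := hψH k ℓ hkl i j hij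
        rw [innerHI_smulMat] at h1
        have hs := sum_symm_swap (SijMat i j) (Matrix.of fun m n => ⟪ι (ψ k ℓ n), ι (φ m)⟫)
          (SijMat_symm i j)
        simp only [Matrix.of_apply] at hs
        have h2 : ∑ m, ∑ n, SijMat i j m n * D m n =
            (∑ m, ∑ n, SijMat i j m n * ⟪ι (ψ k ℓ n), ι (φ m)⟫)
              + ∑ m, ∑ n, SijMat i j m n * ⟪ι (ψ k ℓ m), ι (φ n)⟫ := by
          rw [← Finset.sum_add_distrib]
          refine Finset.sum_congr rfl fun m _ => ?_
          rw [← Finset.sum_add_distrib]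
          refine Finset.sum_congr rfl fun n _ => ?_
          simp [hDdef]
          ring
        rw [h2, ← hs, h1]
        ring
      · exact Or.inr hij
    have hexp := sym_expand D hDsymm p q
    have hpick : (∑ i, ∑ j, if i ≤ j then (∑ m, ∑ n, SijMat i j m n * D m n) * SijMat i j p q
        else 0) = 2 * SijMat k ℓ p q := by
      rw [Finset.sum_eq_single k]
      · rw [Finset.sum_eq_single ℓ]
        · rw [if_pos hkl]
          rcases hcoefD k ℓ with h | h
          · rw [h]; simp
          · exact absurd hkl h
        · intro j _ hj
          split_ifs with hle
          · rcases hcoefD k j with h | h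
            · rw [h]; simp [hj]
            · exact absurd hle h
          · rfl
        · simp
      · intro i _ hi
        apply Finset.sum_eq_zero
        intro j _
        split_ifs with hle
        · rcases hcoefD i j with h | h
          · rw [h]; simp [hi]
          · exact absurd hle h
        · rfl
      · simp
    have := hpick.symm.trans hexp
    simp only [hDdef, Matrix.of_apply] at this
    linarith [this]
  -- part (i), entrywise
  have key : ∀ p q : Fin N, ⟪ι (w p), ι (φ q)⟫ + ⟪ι (w q), ι (φ p)⟫ = 0 := by
    intro p q
    rw [hwp p q, hwp q p]
    have hT : (∑ k, ∑ ℓ, (if k ≤ ℓ then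
          innerHI ι v (smulMat φ (SijMat k ℓ)) * ⟪ι (ψ k ℓ p), ι (φ q)⟫ else 0))
        + (∑ k, ∑ ℓ, (if k ≤ ℓ then
          innerHI ι v (smulMat φ (SijMat k ℓ)) * ⟪ι (ψ k ℓ q), ι (φ p)⟫ else 0))
        = Mv p q := by
      have : ∀ k : Fin N, (∑ ℓ, (if k ≤ ℓ then
            innerHI ι v (smulMat φ (SijMat k ℓ)) * ⟪ι (ψ k ℓ p), ι (φ q)⟫ else 0))
          + (∑ ℓ, (if k ≤ ℓ then
            innerHI ι v (smulMat φ (SijMat k ℓ)) * ⟪ι (ψ k ℓ q), ι (φ p)⟫ else 0))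
          = ∑ ℓ, (if k ≤ ℓ then (∑ i, ∑ j, SijMat k ℓ i j * Mv i j) * SijMat k ℓ p q else 0) := by
        intro k
        rw [← Finset.sum_add_distrib]
        refine Finset.sum_congr rfl fun ℓ _ => ?_
        split_ifs with hkl
        · rw [← mul_add, hD k ℓ hkl p q, hc k ℓ]
          ring
        · simp
      calc (∑ k, ∑ ℓ, (if k ≤ ℓ then
              innerHI ι v (smulMat φ (SijMat k ℓ)) * ⟪ι (ψ k ℓ p), ι (φ q)⟫ else 0))
            + (∑ k, ∑ ℓ, (if k ≤ ℓ then
              innerHI ι v (smulMat φ (SijMat k ℓ)) * ⟪ι (ψ k ℓ q), ι (φ p)⟫ else 0))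
          = ∑ k, ((∑ ℓ, (if k ≤ ℓ then
              innerHI ι v (smulMat φ (SijMat k ℓ)) * ⟪ι (ψ k ℓ p), ι (φ q)⟫ else 0))
            + (∑ ℓ, (if k ≤ ℓ then
              innerHI ι v (smulMat φ (SijMat k ℓ)) * ⟪ι (ψ k ℓ q), ι (φ p)⟫ else 0))) :=
          Finset.sum_add_distrib.symm
        _ = ∑ k, ∑ ℓ, (if k ≤ ℓ then (∑ i, ∑ j, SijMat k ℓ i j * Mv i j) * SijMat k ℓ p q
              else 0) := Finset.sum_congr rfl fun k _ => this k
        _ = Mv p q := sym_expand Mv hMvsymm p q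
    have hMpq : Mv p q = ⟪ι (v p), ι (φ q)⟫ + ⟪ι (v q), ι (φ p)⟫ := by simp [hMv]
    linarith [hT]
  refine ⟨?_, ?_, ?_⟩
  · ext p q
    simp only [Matrix.add_apply, outerProdI, Matrix.of_apply, Matrix.zero_apply]
    rw [real_inner_comm (ι (w q)) (ι (φ p))]
    exact key p q
  · intro η hη
    have hsub : ∀ j, v j - w j = ∑ k, ∑ ℓ, (if k ≤ ℓ then
        innerHI ι v (smulMat φ (SijMat k ℓ)) • ψ k ℓ j else 0) := by
      intro j
      simp [hw, Pphi, Finset.sum_apply, ite_apply]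
    have hstep : ∀ j, aForm (v j - w j) (η j) = ∑ k, ∑ ℓ, (if k ≤ ℓ then
        innerHI ι v (smulMat φ (SijMat k ℓ)) * aForm (ψ k ℓ j) (η j) else 0) := by
      intro j
      rw [hsub j, map_sum, LinearMap.sum_apply]
      refine Finset.sum_congr rfl fun k _ => ?_
      rw [map_sum, LinearMap.sum_apply]
      refine Finset.sum_congr rfl fun ℓ _ => ?_
      split_ifs
      · rw [map_smul]; simp
      · simp
    calc ∑ j, aForm (v j - w j) (η j)
        = ∑ j, ∑ k, ∑ ℓ, (if k ≤ ℓ then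
            innerHI ι v (smulMat φ (SijMat k ℓ)) * aForm (ψ k ℓ j) (η j) else 0) :=
          Finset.sum_congr rfl fun j _ => hstep j
      _ = 0 := by
          rw [Finset.sum_comm]
          apply Finset.sum_eq_zero
          intro k _
          rw [Finset.sum_comm]
          apply Finset.sum_eq_zero
          intro ℓ _
          by_cases hkl : k ≤ ℓ
          · simp only [if_pos hkl, ← Finset.mul_sum, hψa k ℓ hkl η hη, mul_zero]
          · simp [hkl]
  · have hzero : ∀ k ℓ : Fin N, innerHI ι w (smulMat φ (SijMat k ℓ)) = 0 := by
      intro k ℓ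
      rw [innerHI_smulMat]
      have hs := sum_symm_swap (SijMat k ℓ) (Matrix.of fun m n => ⟪ι (w n), ι (φ m)⟫)
        (SijMat_symm k ℓ)
      simp only [Matrix.of_apply] at hs
      have h3 : ∀ i j : Fin N, ⟪ι (w i), ι (φ j)⟫ = -⟪ι (w j), ι (φ i)⟫ := by
        intro i j
        have := key i j
        linarith
      have h4 : ∑ i, ∑ j, SijMat k ℓ i j * ⟪ι (w i), ι (φ j)⟫ =
          -∑ i, ∑ j, SijMat k ℓ i j * ⟪ι (w j), ι (φ i)⟫ := by
        rw [← Finset.sum_neg_distrib]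
        refine Finset.sum_congr rfl fun i _ => ?_
        rw [← Finset.sum_neg_distrib]
        refine Finset.sum_congr rfl fun j _ => ?_
        rw [h3, mul_neg]
      rw [hs] at h4 ⊢
      linarith
    funext x
    simp [Pphi, hzero]
end
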